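/- Consider the inverse Riffle Shuffle Markov chain on permutations of N cards: at each step, every card independently receives a uniformly random bit, and all cards labeled 1 are moved to the top of the deck keeping their relative order. Let T be the first time at which the N sequences of bits assigned to the cards (one sequence per card, accumulated over the steps so far) are all distinct. Then T is a strong stationary time for this chain; in particular, the permutation of the deck at time T is distributed exactly uniformly on the symmetric group S_N. -/

import Mathlib

open MeasureTheory

/-- One run of the inverse Riffle Shuffle chain on `N` cards, driven by the bits `ξ`
(`ξ k c` is the bit assigned to card `c` at step `k`, steps `1, 2, …`):
`shuffleState N ξ k c` is the position of card `c` after `k` steps, starting from the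
identity ordering. At each step every card receives a bit and all cards labeled `1` are
moved to the top of the deck keeping their relative order (cards labeled `0` stay below,
also keeping their relative order). -/
def shuffleState (N : ℕ) (ξ : ℕ → ℕ → Bool) : ℕ → ℕ → ℕ
  | 0 => fun c => c
  | k + 1 => fun c =>
      if ξ (k + 1) c then
        ((Finset.range N).filter fun c' =>
          ξ (k + 1) c' = true ∧ shuffleState N ξ k c' < shuffleState N ξ k c).card
      else
        ((Finset.range N).filter fun c' => ξ (k + 1) c' = true).card +
          ((Finset.range N).filter fun c' =>
            ξ (k + 1) c' = false ∧ shuffleState N ξ k c' < shuffleState N ξ k c).card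

open scoped Classical

namespace RiffleAux

/-- `before ξ k a b` : card `a` is strictly above card `b` (smaller position) after `k`
inverse-riffle steps with bits `ξ`, starting from identity. -/
def before (ξ : ℕ → ℕ → Bool) : ℕ → ℕ → ℕ → Prop
  | 0 => fun a b => a < b
  | k + 1 => fun a b =>
      (ξ (k + 1) a = ξ (k + 1) b ∧ before ξ k a b) ∨ (ξ (k + 1) a = true ∧ ξ (k + 1) b = false)

lemma before_irrefl (ξ : ℕ → ℕ → Bool) : ∀ k a, ¬ before ξ k a a := by
  intro k
  induction k with
  | zero => intro a; simp [before]
  | succ k ih => intro a; simp [before]; intro h; exact ih a h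

lemma before_total (ξ : ℕ → ℕ → Bool) : ∀ k a b, a ≠ b → before ξ k a b ∨ before ξ k b a := by
  intro k
  induction k with
  | zero => intro a b h; simp [before]; omega
  | succ k ih =>
    intro a b h
    by_cases hb : ξ (k + 1) a = ξ (k + 1) b
    · rcases ih a b h with h1 | h1
      · exact Or.inl (Or.inl ⟨hb, h1⟩)
      · exact Or.inr (Or.inl ⟨hb.symm, h1⟩)
    · cases ha : ξ (k + 1) a <;> cases hb' : ξ (k + 1) b <;> simp_all [before]

lemma before_trans (ξ : ℕ → ℕ → Bool) :
    ∀ k a b c, before ξ k a b → before ξ k b c → before ξ k a c := by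
  intro k
  induction k with
  | zero => intro a b c; simp [before]; omega
  | succ k ih =>
    intro a b c hab hbc
    rcases hab with ⟨e1, h1⟩ | ⟨e1, e1'⟩ <;> rcases hbc with ⟨e2, h2⟩ | ⟨e2, e2'⟩
    · exact Or.inl ⟨e1.trans e2, ih _ _ _ h1 h2⟩
    · exact Or.inr ⟨e1.trans e2, e2'⟩
    · exact Or.inr ⟨e1, e1'.symm ▸ e2.symm⟩
    · rw [e2] at e1'; exact absurd e1' (by simp)

variable (N : ℕ)

/-- rank of card `c` after `k` steps -/
noncomputable def rnk (ξ : ℕ → ℕ → Bool) (k c : ℕ) : ℕ :=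
  ((Finset.range N).filter fun c' => before ξ k c' c).card

lemma rnk_lt_rnk (ξ : ℕ → ℕ → Bool) (k : ℕ) {a b : ℕ} (ha : a < N) (_hb : b < N) :
    before ξ k a b → rnk N ξ k a < rnk N ξ k b := by
  intro h
  have hsub : insert a ((Finset.range N).filter fun c' => before ξ k c' a) ⊆
      (Finset.range N).filter fun c' => before ξ k c' b := by
    intro x hx
    rcases Finset.mem_insert.mp hx with rfl | hx
    · exact Finset.mem_filter.mpr ⟨Finset.mem_range.mpr ha, h⟩
    · rcases Finset.mem_filter.mp hx with ⟨h1, h2⟩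
      exact Finset.mem_filter.mpr ⟨h1, before_trans ξ k _ _ _ h2 h⟩
  have hnot : a ∉ (Finset.range N).filter fun c' => before ξ k c' a := by
    simp [before_irrefl]
  calc rnk N ξ k a < rnk N ξ k a + 1 := Nat.lt_succ_self _
  _ = (insert a ((Finset.range N).filter fun c' => before ξ k c' a)).card := by
      rw [Finset.card_insert_of_notMem hnot]; rfl
  _ ≤ _ := Finset.card_le_card hsub

lemma rnk_lt_rnk_iff (ξ : ℕ → ℕ → Bool) (k : ℕ) {a b : ℕ} (ha : a < N) (hb : b < N) :
    rnk N ξ k a < rnk N ξ k b ↔ before ξ k a b := by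
  constructor
  · intro h
    by_contra hcon
    rcases eq_or_ne a b with rfl | hne
    · omega
    · rcases before_total ξ k a b hne with h1 | h1
      · exact hcon h1
      · exact absurd (rnk_lt_rnk N ξ k hb ha h1) (by omega)
  · exact rnk_lt_rnk N ξ k ha hb

lemma rnk_inj (ξ : ℕ → ℕ → Bool) (k : ℕ) {a b : ℕ} (ha : a < N) (hb : b < N)
    (h : rnk N ξ k a = rnk N ξ k b) : a = b := by
  by_contra hne
  rcases before_total ξ k a b hne with h1 | h1
  · exact absurd (rnk_lt_rnk N ξ k ha hb h1) (by omega)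
  · exact absurd (rnk_lt_rnk N ξ k hb ha h1) (by omega)

lemma rnk_lt (ξ : ℕ → ℕ → Bool) (k : ℕ) {c : ℕ} (hc : c < N) : rnk N ξ k c < N := by
  have hsub : (Finset.range N).filter (fun c' => before ξ k c' c) ⊆ (Finset.range N).erase c := by
    intro x hx
    rcases Finset.mem_filter.mp hx with ⟨h1, h2⟩
    refine Finset.mem_erase.mpr ⟨?_, h1⟩
    rintro rfl; exact before_irrefl ξ k _ h2
  have := Finset.card_le_card hsub
  rw [Finset.card_erase_of_mem (Finset.mem_range.mpr hc), Finset.card_range] at this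
  have : rnk N ξ k c ≤ N - 1 := this
  omega

lemma shuffle_eq_rnk (ξ : ℕ → ℕ → Bool) : ∀ k, ∀ c < N, shuffleState N ξ k c = rnk N ξ k c := by
  intro k
  induction k with
  | zero =>
    intro c hc
    have h0 : (Finset.range N).filter (fun c' => before ξ 0 c' c) = Finset.range c := by
      ext x; simp only [Finset.mem_filter, Finset.mem_range]; change x < N ∧ x < c ↔ x < c; omega
    show c = rnk N ξ 0 c
    unfold rnk
    rw [h0, Finset.card_range]
  | succ k ih =>
    intro c hc
    have horder : ∀ c' < N, (shuffleState N ξ k c' < shuffleState N ξ k c ↔ before ξ k c' c) := by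
      intro c' hc'
      rw [ih c' hc', ih c hc]
      exact rnk_lt_rnk_iff N ξ k hc' hc
    have hdef : shuffleState N ξ (k+1) c = if ξ (k + 1) c then
        ((Finset.range N).filter fun c' =>
          ξ (k + 1) c' = true ∧ shuffleState N ξ k c' < shuffleState N ξ k c).card
      else
        ((Finset.range N).filter fun c' => ξ (k + 1) c' = true).card +
          ((Finset.range N).filter fun c' =>
            ξ (k + 1) c' = false ∧ shuffleState N ξ k c' < shuffleState N ξ k c).card := rfl
    have hunf : ∀ x, before ξ (k+1) x c ↔
        (ξ (k + 1) x = ξ (k + 1) c ∧ before ξ k x c) ∨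
          (ξ (k + 1) x = true ∧ ξ (k + 1) c = false) := fun x => Iff.rfl
    cases hbit : ξ (k + 1) c
    · -- bit false
      rw [hdef, if_neg (by simp [hbit])]
      unfold rnk
      have hsplit : ((Finset.range N).filter fun c' => before ξ (k+1) c' c)
          = ((Finset.range N).filter fun c' => ξ (k+1) c' = true)
            ∪ ((Finset.range N).filter fun c' => ξ (k+1) c' = false ∧
                shuffleState N ξ k c' < shuffleState N ξ k c) := by
        rw [← Finset.filter_or]
        apply Finset.filter_congr
        intro x hx
        have hx' := Finset.mem_range.mp hx
        rw [hunf x, hbit, horder x hx']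
        cases hxb : ξ (k+1) x <;> simp
      rw [hsplit, Finset.card_union_of_disjoint]
      rw [Finset.disjoint_left]
      intro x hx1 hx2
      rw [Finset.mem_filter] at hx1 hx2
      rw [hx1.2] at hx2
      exact absurd hx2.2.1 (by simp)
    · -- bit true
      rw [hdef, if_pos hbit]
      unfold rnk
      congr 1
      apply Finset.filter_congr
      intro x hx
      have hx' := Finset.mem_range.mp hx
      rw [hunf x, hbit, horder x hx']
      cases hxb : ξ (k+1) x <;> simp

lemma shuffle_bijOn (ξ : ℕ → ℕ → Bool) (k : ℕ) :
    Set.BijOn (shuffleState N ξ k) (Set.Iio N) (Set.Iio N) := by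
  have hmaps : Set.MapsTo (shuffleState N ξ k) (Set.Iio N) (Set.Iio N) := by
    intro c hc
    have hc' : c < N := hc
    rw [Set.mem_Iio, shuffle_eq_rnk N ξ k c hc']
    exact rnk_lt N ξ k hc'
  have hinj : Set.InjOn (shuffleState N ξ k) (Set.Iio N) := by
    intro a ha b hb hab
    rw [shuffle_eq_rnk N ξ k a ha, shuffle_eq_rnk N ξ k b hb] at hab
    exact rnk_inj N ξ k ha hb hab
  exact ((Set.finite_Iio N).injOn_iff_bijOn_of_mapsTo hmaps).mp hinj

lemma before_congr {ξ ξ' : ℕ → ℕ → Bool} :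
    ∀ k, (∀ m, 1 ≤ m → m ≤ k → ∀ c < N, ξ m c = ξ' m c) →
    ∀ a < N, ∀ b < N, (before ξ k a b ↔ before ξ' k a b) := by
  intro k
  induction k with
  | zero => intro _ a _ b _; exact Iff.rfl
  | succ k ih =>
    intro h a ha b hb
    have h' : ∀ m, 1 ≤ m → m ≤ k → ∀ c < N, ξ m c = ξ' m c :=
      fun m h1 h2 c hc => h m h1 (by omega) c hc
    show (ξ (k+1) a = ξ (k+1) b ∧ before ξ k a b) ∨ (ξ (k+1) a = true ∧ ξ (k+1) b = false) ↔
      (ξ' (k+1) a = ξ' (k+1) b ∧ before ξ' k a b) ∨ (ξ' (k+1) a = true ∧ ξ' (k+1) b = false)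
    rw [h (k+1) (by omega) le_rfl a ha, h (k+1) (by omega) le_rfl b hb, ih h' a ha b hb]

lemma shuffle_congr {ξ ξ' : ℕ → ℕ → Bool} (k : ℕ)
    (h : ∀ m, 1 ≤ m → m ≤ k → ∀ c < N, ξ m c = ξ' m c) :
    ∀ c < N, shuffleState N ξ k c = shuffleState N ξ' k c := by
  intro c hc
  rw [shuffle_eq_rnk N ξ k c hc, shuffle_eq_rnk N ξ' k c hc]
  unfold rnk
  congr 1
  apply Finset.filter_congr
  intro x hx
  exact before_congr N k h x (Finset.mem_range.mp hx) c hc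

lemma before_comp (ξ : ℕ → ℕ → Bool) (σ : ℕ → ℕ) :
    ∀ k a b, (∃ m, 1 ≤ m ∧ m ≤ k ∧ ξ m (σ a) ≠ ξ m (σ b)) →
    (before (fun m c => ξ m (σ c)) k a b ↔ before ξ k (σ a) (σ b)) := by
  intro k
  induction k with
  | zero => intro a b hw; exact absurd hw (by rintro ⟨m, h1, h2, _⟩; omega)
  | succ k ih =>
    intro a b hw
    show (ξ (k+1) (σ a) = ξ (k+1) (σ b) ∧ before (fun m c => ξ m (σ c)) k a b) ∨
        (ξ (k+1) (σ a) = true ∧ ξ (k+1) (σ b) = false) ↔ _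
    by_cases hbit : ξ (k+1) (σ a) = ξ (k+1) (σ b)
    · have hw' : ∃ m, 1 ≤ m ∧ m ≤ k ∧ ξ m (σ a) ≠ ξ m (σ b) := by
        rcases hw with ⟨m, h1, h2, h3⟩
        rcases eq_or_ne m (k+1) with rfl | hne
        · exact absurd hbit h3
        · exact ⟨m, h1, by omega, h3⟩
      rw [ih a b hw']
      exact Iff.rfl
    · constructor
      · rintro (⟨h1, _⟩ | h1)
        · exact absurd h1 hbit
        · exact Or.inr h1
      · rintro (⟨h1, _⟩ | h1)
        · exact absurd h1 hbit
        · exact Or.inr h1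

/-- distinctness of bit columns up to time `k` -/
def Dst (ξ : ℕ → ℕ → Bool) (k : ℕ) : Prop :=
  ∀ c₁ < N, ∀ c₂ < N, c₁ ≠ c₂ → ∃ m, 1 ≤ m ∧ m ≤ k ∧ ξ m c₁ ≠ ξ m c₂

lemma shuffle_reindex (ξ : ℕ → ℕ → Bool) (k : ℕ) (σ : ℕ → ℕ)
    (hσ : Set.BijOn σ (Set.Iio N) (Set.Iio N)) (hdist : Dst N ξ k) :
    ∀ c < N, shuffleState N (fun m c' => ξ m (σ c')) k c = shuffleState N ξ k (σ c) := by
  intro c hc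
  have hσc : σ c < N := hσ.mapsTo hc
  rw [shuffle_eq_rnk N _ k c hc, shuffle_eq_rnk N ξ k (σ c) hσc]
  unfold rnk
  have hstep : ((Finset.range N).filter fun c' => before (fun m c'' => ξ m (σ c'')) k c' c)
      = ((Finset.range N).filter fun c' => before ξ k (σ c') (σ c)) := by
    apply Finset.filter_congr
    intro x hx
    have hx' := Finset.mem_range.mp hx
    rcases eq_or_ne x c with rfl | hne
    · simp [before_irrefl]
    · have hσne : σ x ≠ σ c := fun h => hne (hσ.injOn hx' hc h)
      exact before_comp ξ σ k x c (hdist (σ x) (hσ.mapsTo hx') (σ c) hσc hσne)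
  rw [hstep]
  apply Finset.card_bij (fun a _ => σ a)
  · intro a ha
    rw [Finset.mem_filter] at ha ⊢
    exact ⟨Finset.mem_range.mpr (hσ.mapsTo (Finset.mem_range.mp ha.1)), ha.2⟩
  · intro a₁ h1 a₂ h2 h
    exact hσ.injOn (Finset.mem_range.mp (Finset.mem_filter.mp h1).1)
      (Finset.mem_range.mp (Finset.mem_filter.mp h2).1) h
  · intro b hbm
    rw [Finset.mem_filter] at hbm
    rcases hσ.surjOn (Finset.mem_range.mp hbm.1 : b ∈ Set.Iio N) with ⟨a, ha, rfl⟩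
    exact ⟨a, Finset.mem_filter.mpr ⟨Finset.mem_range.mpr ha, hbm.2⟩, rfl⟩

lemma Dst_congr {ξ ξ' : ℕ → ℕ → Bool} (k : ℕ)
    (h : ∀ m, 1 ≤ m → m ≤ k → ∀ c < N, ξ m c = ξ' m c) (j : ℕ) (hj : j ≤ k) :
    Dst N ξ j ↔ Dst N ξ' j := by
  constructor <;> intro hd c₁ h1 c₂ h2 hne <;> rcases hd c₁ h1 c₂ h2 hne with ⟨m, hm1, hm2, hm3⟩ <;>
    refine ⟨m, hm1, hm2, ?_⟩
  · rw [← h m hm1 (by omega) c₁ h1, ← h m hm1 (by omega) c₂ h2]; exact hm3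
  · rw [h m hm1 (by omega) c₁ h1, h m hm1 (by omega) c₂ h2]; exact hm3

lemma Dst_reindex (ξ : ℕ → ℕ → Bool) (j : ℕ) (σ : ℕ → ℕ)
    (hσ : Set.BijOn σ (Set.Iio N) (Set.Iio N)) :
    Dst N (fun m c => ξ m (σ c)) j ↔ Dst N ξ j := by
  constructor
  · intro hd c₁ h1 c₂ h2 hne
    rcases hσ.surjOn (h1 : c₁ ∈ Set.Iio N) with ⟨d₁, hd1, rfl⟩
    rcases hσ.surjOn (h2 : c₂ ∈ Set.Iio N) with ⟨d₂, hd2, rfl⟩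
    exact hd d₁ hd1 d₂ hd2 (fun h => hne (congrArg σ h))
  · intro hd c₁ h1 c₂ h2 hne
    exact hd (σ c₁) (hσ.mapsTo h1) (σ c₂) (hσ.mapsTo h2)
      (fun h => hne (hσ.injOn h1 h2 h))

/-- extension of a finite bit pattern to a full bit function -/
def extPat (N k : ℕ) (g : Fin k → Fin N → Bool) : ℕ → ℕ → Bool :=
  fun m c => if h : 1 ≤ m ∧ m ≤ k ∧ c < N then g ⟨m - 1, by omega⟩ ⟨c, h.2.2⟩ else false

def sigHat (N : ℕ) (σ : Equiv.Perm (Fin N)) (c : ℕ) : ℕ :=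
  if h : c < N then (σ ⟨c, h⟩ : ℕ) else c

lemma sigHat_lt {N : ℕ} (σ : Equiv.Perm (Fin N)) {c : ℕ} (hc : c < N) :
    sigHat N σ c < N := by
  rw [sigHat, dif_pos hc]; exact (σ ⟨c, hc⟩).2

lemma sigHat_bijOn (N : ℕ) (σ : Equiv.Perm (Fin N)) :
    Set.BijOn (sigHat N σ) (Set.Iio N) (Set.Iio N) := by
  refine ⟨fun c hc => sigHat_lt σ hc, ?_, ?_⟩
  · intro a ha b hb h
    have ha' : a < N := ha
    have hb' : b < N := hb
    rw [sigHat, sigHat, dif_pos ha', dif_pos hb'] at h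
    have := σ.injective (Fin.val_injective h)
    exact congrArg Fin.val this
  · intro d hd
    have hd' : d < N := hd
    refine ⟨(σ.symm ⟨d, hd'⟩ : ℕ), (σ.symm ⟨d, hd'⟩).2, ?_⟩
    rw [sigHat, dif_pos (σ.symm ⟨d, hd'⟩).2]
    simp

lemma extPat_perm (N k : ℕ) (g : Fin k → Fin N → Bool) (σ : Equiv.Perm (Fin N)) :
    extPat N k (fun m c => g m (σ c)) = fun m c => extPat N k g m (sigHat N σ c) := by
  funext m c
  by_cases hc : c < N
  · have hlt : sigHat N σ c < N := sigHat_lt σ hc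
    by_cases hm : 1 ≤ m ∧ m ≤ k
    · rw [extPat, dif_pos ⟨hm.1, hm.2, hc⟩]
      rw [extPat, dif_pos ⟨hm.1, hm.2, hlt⟩]
      congr 1
      have : sigHat N σ c = (σ ⟨c, hc⟩ : ℕ) := by rw [sigHat, dif_pos hc]
      apply Fin.ext
      simp [this]
    · rw [extPat, dif_neg (by tauto), extPat, dif_neg (by tauto)]
  · have : sigHat N σ c = c := by rw [sigHat, dif_neg hc]
    rw [this, extPat, dif_neg (by tauto), extPat, dif_neg (by tauto)]

section Count

variable {N k : ℕ} (P : (Fin k → Fin N → Bool) → Prop)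

lemma fiber_mem {s s' : ℕ → ℕ}
    (hP : ∀ (σ : Equiv.Perm (Fin N)) g, P (fun m c => g m (σ c)) ↔ P g)
    (hPD : ∀ g, P g → Dst N (extPat N k g) k)
    (σ : Equiv.Perm (Fin N))
    (hss' : ∀ c < N, s (sigHat N σ c) = s' c)
    (g : Fin k → Fin N → Bool)
    (hg : P g ∧ ∀ c < N, shuffleState N (extPat N k g) k c = s c) :
    P (fun m c => g m (σ c)) ∧
      ∀ c < N, shuffleState N (extPat N k (fun m c => g m (σ c))) k c = s' c := by
  refine ⟨(hP σ g).mpr hg.1, ?_⟩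
  intro c hc
  rw [extPat_perm N k g σ]
  rw [shuffle_reindex N (extPat N k g) k (sigHat N σ) (sigHat_bijOn N σ) (hPD g hg.1) c hc]
  rw [hg.2 _ (sigHat_lt σ hc)]
  exact hss' c hc

lemma fiber_card_eq
    (hP : ∀ (σ : Equiv.Perm (Fin N)) g, P (fun m c => g m (σ c)) ↔ P g)
    (hPD : ∀ g, P g → Dst N (extPat N k g) k)
    {s s' : ℕ → ℕ} (hs : Set.BijOn s (Set.Iio N) (Set.Iio N))
    (hs' : Set.BijOn s' (Set.Iio N) (Set.Iio N)) :
    (Finset.univ.filter fun g => P g ∧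
        ∀ c < N, shuffleState N (extPat N k g) k c = s c).card =
    (Finset.univ.filter fun g => P g ∧
        ∀ c < N, shuffleState N (extPat N k g) k c = s' c).card := by
  have hesb : Function.Bijective (fun c : Fin N => (⟨s c, hs.mapsTo c.2⟩ : Fin N)) := by
    have hinj : Function.Injective (fun c : Fin N => (⟨s c, hs.mapsTo c.2⟩ : Fin N)) := by
      intro a b h
      exact Fin.ext (hs.injOn a.2 b.2 (congrArg Fin.val h))
    exact ⟨hinj, Finite.surjective_of_injective hinj⟩
  have hesb' : Function.Bijective (fun c : Fin N => (⟨s' c, hs'.mapsTo c.2⟩ : Fin N)) := by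
    have hinj : Function.Injective (fun c : Fin N => (⟨s' c, hs'.mapsTo c.2⟩ : Fin N)) := by
      intro a b h
      exact Fin.ext (hs'.injOn a.2 b.2 (congrArg Fin.val h))
    exact ⟨hinj, Finite.surjective_of_injective hinj⟩
  set es : Fin N ≃ Fin N := Equiv.ofBijective _ hesb with hes
  set es' : Fin N ≃ Fin N := Equiv.ofBijective _ hesb' with hes'
  have key : ∀ d : Fin N, s ((es.symm d : Fin N) : ℕ) = (d : ℕ) := by
    intro d
    have := es.apply_symm_apply d
    have := congrArg Fin.val this
    simpa [hes, Equiv.ofBijective] using this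
  have key' : ∀ d : Fin N, s' ((es'.symm d : Fin N) : ℕ) = (d : ℕ) := by
    intro d
    have := es'.apply_symm_apply d
    have := congrArg Fin.val this
    simpa [hes', Equiv.ofBijective] using this
  set σ : Equiv.Perm (Fin N) := es'.trans es.symm with hσ
  have hss' : ∀ c < N, s (sigHat N σ c) = s' c := by
    intro c hc
    rw [sigHat, dif_pos hc]
    have : σ ⟨c, hc⟩ = es.symm (es' ⟨c, hc⟩) := rfl
    rw [this, key (es' ⟨c, hc⟩)]
    simp [hes', Equiv.ofBijective]
  have hss'' : ∀ c < N, s' (sigHat N σ.symm c) = s c := by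
    intro c hc
    rw [sigHat, dif_pos hc]
    have : σ.symm ⟨c, hc⟩ = es'.symm (es ⟨c, hc⟩) := rfl
    rw [this, key' (es ⟨c, hc⟩)]
    simp [hes, Equiv.ofBijective]
  apply Finset.card_bij' (fun g _ => fun m c => g m (σ c)) (fun g _ => fun m c => g m (σ.symm c))
  · intro g hg
    rw [Finset.mem_filter] at hg ⊢
    exact ⟨Finset.mem_univ _, fiber_mem P hP hPD σ hss' g hg.2⟩
  · intro g hg
    rw [Finset.mem_filter] at hg ⊢
    exact ⟨Finset.mem_univ _, fiber_mem P hP hPD σ.symm hss'' g hg.2⟩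
  · intro g _
    funext m c
    simp
  · intro g _
    funext m c
    simp

lemma count_main (hN : 0 < N)
    (hP : ∀ (σ : Equiv.Perm (Fin N)) g, P (fun m c => g m (σ c)) ↔ P g)
    (hPD : ∀ g, P g → Dst N (extPat N k g) k)
    {s : ℕ → ℕ} (hs : Set.BijOn s (Set.Iio N) (Set.Iio N)) :
    (Finset.univ.filter P).card =
      N.factorial * (Finset.univ.filter fun g => P g ∧
        ∀ c < N, shuffleState N (extPat N k g) k c = s c).card := by
  have hφb : ∀ g : Fin k → Fin N → Bool, Function.Bijective
      (fun c : Fin N => (⟨shuffleState N (extPat N k g) k c,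
        (shuffle_bijOn N (extPat N k g) k).mapsTo c.2⟩ : Fin N)) := by
    intro g
    have hinj : Function.Injective (fun c : Fin N => (⟨shuffleState N (extPat N k g) k c,
        (shuffle_bijOn N (extPat N k g) k).mapsTo c.2⟩ : Fin N)) := by
      intro a b h
      exact Fin.ext ((shuffle_bijOn N (extPat N k g) k).injOn a.2 b.2 (congrArg Fin.val h))
    exact ⟨hinj, Finite.surjective_of_injective hinj⟩
  set φ : (Fin k → Fin N → Bool) → Equiv.Perm (Fin N) :=
    fun g => Equiv.ofBijective _ (hφb g) with hφ
  have hφval : ∀ g (x : Fin N), (φ g x : ℕ) = shuffleState N (extPat N k g) k x := by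
    intro g x
    simp [hφ, Equiv.ofBijective]
  rw [Finset.card_eq_sum_card_fiberwise
    (f := φ) (t := (Finset.univ : Finset (Equiv.Perm (Fin N)))) (fun _ _ => Finset.mem_univ _)]
  have hfib : ∀ π : Equiv.Perm (Fin N),
      ((Finset.univ.filter P).filter fun g => φ g = π) =
      (Finset.univ.filter fun g => P g ∧
        ∀ c < N, shuffleState N (extPat N k g) k c = sigHat N π c) := by
    intro π
    rw [Finset.filter_filter]
    apply Finset.filter_congr
    intro g _
    constructor
    · rintro ⟨h1, rfl⟩
      refine ⟨h1, fun c hc => ?_⟩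
      rw [sigHat, dif_pos hc, ← hφval g ⟨c, hc⟩]
    · rintro ⟨h1, h2⟩
      refine ⟨h1, Equiv.ext fun x => Fin.ext ?_⟩
      rw [hφval g x, h2 x.1 x.2, sigHat, dif_pos x.2]
  have hconst : ∀ π : Equiv.Perm (Fin N),
      ((Finset.univ.filter P).filter fun g => φ g = π).card =
      (Finset.univ.filter fun g => P g ∧
        ∀ c < N, shuffleState N (extPat N k g) k c = s c).card := by
    intro π
    rw [hfib π]
    exact fiber_card_eq P hP hPD (sigHat_bijOn N π) hs
  rw [Finset.sum_congr rfl (fun π _ => hconst π), Finset.sum_const, Finset.card_univ,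
    Fintype.card_perm, Fintype.card_fin, smul_eq_mul]

end Count

section Meas

variable {Ω : Type*} [MeasurableSpace Ω] (μ : Measure Ω)
variable (N : ℕ) (ξ : ℕ → ℕ → Ω → Bool)

/-- the window of relevant coordinates -/
def winF (k : ℕ) : Finset (ℕ × ℕ) := Finset.Icc 1 k ×ˢ Finset.range N

lemma mem_winF {k : ℕ} {p : ℕ × ℕ} : p ∈ winF N k ↔ (1 ≤ p.1 ∧ p.1 ≤ k) ∧ p.2 < N := by
  rw [winF, Finset.mem_product, Finset.mem_Icc, Finset.mem_range]

lemma winF_card (k : ℕ) : (winF N k).card = k * N := by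
  rw [winF, Finset.card_product, Nat.card_Icc, Finset.card_range, Nat.add_sub_cancel]

lemma winF_snd_lt (k : ℕ) : ∀ p ∈ winF N k, p.2 < N := fun p hp => ((mem_winF N).mp hp).2

def atomSet (k : ℕ) (g : Fin k → Fin N → Bool) : Set Ω :=
  {ω | ∀ p ∈ winF N k, ξ p.1 p.2 ω = extPat N k g p.1 p.2}

lemma extPat_apply (k : ℕ) (g : Fin k → Fin N → Bool) (m : Fin k) (c : Fin N) :
    extPat N k g ((m : ℕ) + 1) (c : ℕ) = g m c := by
  rw [extPat, dif_pos ⟨Nat.succ_le_succ (Nat.zero_le _), Nat.succ_le_of_lt m.2, c.2⟩]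
  congr 1 <;> apply Fin.ext <;> simp

lemma mem_atomSet_self (k : ℕ) (ω : Ω) :
    ω ∈ atomSet N ξ k (fun m c => ξ ((m : ℕ) + 1) (c : ℕ) ω) := by
  intro p hp
  rcases (mem_winF N).mp hp with ⟨⟨h1, h2⟩, h3⟩
  rw [extPat, dif_pos ⟨h1, h2, h3⟩]
  have hp : p.1 - 1 + 1 = p.1 := by omega
  simp [hp]

lemma atomSet_agree {k : ℕ} {g : Fin k → Fin N → Bool} {ω : Ω} (hω : ω ∈ atomSet N ξ k g) :
    ∀ m, 1 ≤ m → m ≤ k → ∀ c < N, ξ m c ω = extPat N k g m c := by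
  intro m h1 h2 c hc
  exact hω (m, c) ((mem_winF N).mpr ⟨⟨h1, h2⟩, hc⟩)

lemma atomSet_measurable (hmeas : ∀ k c, Measurable (ξ k c)) (k : ℕ)
    (g : Fin k → Fin N → Bool) : MeasurableSet (atomSet N ξ k g) := by
  have : atomSet N ξ k g = ⋂ p ∈ winF N k, (ξ p.1 p.2) ⁻¹' {extPat N k g p.1 p.2} := by
    ext ω
    simp [atomSet, Set.mem_iInter]
  rw [this]
  exact Finset.measurableSet_biInter _ fun p _ => (hmeas p.1 p.2) (measurableSet_singleton _)

lemma atomSet_disjoint {k : ℕ} {g g' : Fin k → Fin N → Bool} (h : g ≠ g') :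
    Disjoint (atomSet N ξ k g) (atomSet N ξ k g') := by
  rw [Set.disjoint_left]
  intro ω h1 h2
  apply h
  funext m c
  have e1 := h1 (((m : ℕ) + 1, (c : ℕ)))
    ((mem_winF N).mpr ⟨⟨Nat.succ_le_succ (Nat.zero_le _), Nat.succ_le_of_lt m.2⟩, c.2⟩)
  have e2 := h2 (((m : ℕ) + 1, (c : ℕ)))
    ((mem_winF N).mpr ⟨⟨Nat.succ_le_succ (Nat.zero_le _), Nat.succ_le_of_lt m.2⟩, c.2⟩)
  rw [extPat_apply] at e1 e2
  rw [← e1, ← e2]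

lemma event_rep (k : ℕ) (Q : (ℕ → ℕ → Bool) → Prop)
    (hQ : ∀ ζ ζ', (∀ m, 1 ≤ m → m ≤ k → ∀ c < N, ζ m c = ζ' m c) → (Q ζ ↔ Q ζ')) :
    {ω | Q (fun m c => ξ m c ω)} =
      ⋃ g ∈ (Finset.univ.filter fun g : Fin k → Fin N → Bool => Q (extPat N k g)),
        atomSet N ξ k g := by
  ext ω
  simp only [Set.mem_setOf_eq, Set.mem_iUnion, Finset.mem_filter, Finset.mem_univ, true_and,
    exists_prop]
  constructor
  · intro hω
    refine ⟨fun m c => ξ ((m : ℕ) + 1) (c : ℕ) ω, ?_, mem_atomSet_self N ξ k ω⟩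
    exact (hQ _ _ (atomSet_agree N ξ (mem_atomSet_self N ξ k ω))).mp hω
  · rintro ⟨g, hg, hω⟩
    exact (hQ _ _ (atomSet_agree N ξ hω)).mpr hg

lemma event_measurable (hmeas : ∀ k c, Measurable (ξ k c)) (k : ℕ)
    (Q : (ℕ → ℕ → Bool) → Prop)
    (hQ : ∀ ζ ζ', (∀ m, 1 ≤ m → m ≤ k → ∀ c < N, ζ m c = ζ' m c) → (Q ζ ↔ Q ζ')) :
    MeasurableSet {ω | Q (fun m c => ξ m c ω)} := by
  rw [event_rep N ξ k Q hQ]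
  exact (Finset.univ.filter fun g : Fin k → Fin N → Bool =>
    Q (extPat N k g)).measurableSet_biUnion fun g _ => atomSet_measurable N ξ hmeas k g

lemma event_meas (hmeas : ∀ k c, Measurable (ξ k c))
    (hiid : ∀ (F : Finset (ℕ × ℕ)) (f : ℕ → ℕ → Bool), (∀ p ∈ F, p.2 < N) →
      μ {ω | ∀ p ∈ F, ξ p.1 p.2 ω = f p.1 p.2} = (1 / 2 : ENNReal) ^ F.card)
    (k : ℕ) (Q : (ℕ → ℕ → Bool) → Prop)
    (hQ : ∀ ζ ζ', (∀ m, 1 ≤ m → m ≤ k → ∀ c < N, ζ m c = ζ' m c) → (Q ζ ↔ Q ζ')) :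
    μ {ω | Q (fun m c => ξ m c ω)} =
      ((Finset.univ.filter fun g : Fin k → Fin N → Bool => Q (extPat N k g)).card : ℕ) *
        (1 / 2 : ENNReal) ^ (k * N) := by
  rw [event_rep N ξ k Q hQ]
  rw [measure_biUnion_finset ?_ (fun g _ => atomSet_measurable N ξ hmeas k g)]
  · have hatom : ∀ g : Fin k → Fin N → Bool, μ (atomSet N ξ k g) = (1 / 2 : ENNReal) ^ (k * N) := by
      intro g
      have := hiid (winF N k) (extPat N k g) (winF_snd_lt N k)
      rw [winF_card] at this
      exact this
    rw [Finset.sum_congr rfl fun g _ => hatom g, Finset.sum_const, nsmul_eq_mul]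
  · intro g hg g' hg' hne
    exact atomSet_disjoint N ξ hne

lemma pair_bound
    (hiid : ∀ (F : Finset (ℕ × ℕ)) (f : ℕ → ℕ → Bool), (∀ p ∈ F, p.2 < N) →
      μ {ω | ∀ p ∈ F, ξ p.1 p.2 ω = f p.1 p.2} = (1 / 2 : ENNReal) ^ F.card)
    {c₁ c₂ : ℕ} (h1 : c₁ < N) (h2 : c₂ < N) (hne : c₁ ≠ c₂) (j : ℕ) :
    μ {ω | ∀ m, 1 ≤ m → m ≤ j → ξ m c₁ ω = ξ m c₂ ω} ≤ (1 / 2 : ENNReal) ^ j := by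
  set Fp : Finset (ℕ × ℕ) := Finset.Icc 1 j ×ˢ ({c₁, c₂} : Finset ℕ) with hFp
  have hFpmem : ∀ p : ℕ × ℕ, p ∈ Fp ↔ (1 ≤ p.1 ∧ p.1 ≤ j) ∧ (p.2 = c₁ ∨ p.2 = c₂) := by
    intro p
    rw [hFp, Finset.mem_product, Finset.mem_Icc, Finset.mem_insert, Finset.mem_singleton]
  have hFpcard : Fp.card = j * 2 := by
    rw [hFp, Finset.card_product, Nat.card_Icc, Nat.add_sub_cancel,
      Finset.card_insert_of_notMem (by simpa using hne), Finset.card_singleton]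
  set fb : (Fin j → Bool) → ℕ → ℕ → Bool := fun b m _ =>
    if h : 1 ≤ m ∧ m ≤ j then b ⟨m - 1, by omega⟩ else false with hfb
  have hsub : {ω | ∀ m, 1 ≤ m → m ≤ j → ξ m c₁ ω = ξ m c₂ ω} ⊆
      ⋃ b ∈ (Finset.univ : Finset (Fin j → Bool)),
        {ω | ∀ p ∈ Fp, ξ p.1 p.2 ω = fb b p.1 p.2} := by
    intro ω hω
    rw [Set.mem_iUnion]
    refine ⟨fun m => ξ ((m : ℕ) + 1) c₁ ω, ?_⟩
    rw [Set.mem_iUnion]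
    refine ⟨Finset.mem_univ _, ?_⟩
    intro p hp
    rcases (hFpmem p).mp hp with ⟨⟨hp1, hp2⟩, hp3⟩
    have hv : ξ p.1 p.2 ω = ξ p.1 c₁ ω := by
      rcases hp3 with rfl | h
      · rfl
      · rw [h]; exact (hω p.1 hp1 hp2).symm
    rw [hv, hfb]
    show ξ p.1 c₁ ω = if h : 1 ≤ p.1 ∧ p.1 ≤ j then ξ ((p.1 - 1) + 1) c₁ ω else false
    rw [dif_pos (show 1 ≤ p.1 ∧ p.1 ≤ j from ⟨hp1, hp2⟩)]
    congr 1
    omega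
  calc μ {ω | ∀ m, 1 ≤ m → m ≤ j → ξ m c₁ ω = ξ m c₂ ω}
      ≤ μ (⋃ b ∈ (Finset.univ : Finset (Fin j → Bool)),
        {ω | ∀ p ∈ Fp, ξ p.1 p.2 ω = fb b p.1 p.2}) := measure_mono hsub
    _ ≤ ∑ b ∈ (Finset.univ : Finset (Fin j → Bool)),
        μ {ω | ∀ p ∈ Fp, ξ p.1 p.2 ω = fb b p.1 p.2} := measure_biUnion_finset_le _ _
    _ = ∑ _b ∈ (Finset.univ : Finset (Fin j → Bool)), (1 / 2 : ENNReal) ^ (j * 2) := by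
        refine Finset.sum_congr rfl fun b _ => ?_
        rw [hiid Fp (fb b) (fun p hp => by
          rcases ((hFpmem p).mp hp).2 with h | h <;> rw [h] <;> assumption), hFpcard]
    _ = (2 : ENNReal) ^ j * (1 / 2 : ENNReal) ^ (j * 2) := by
        rw [Finset.sum_const, Finset.card_univ, nsmul_eq_mul]
        congr 1
        rw [Fintype.card_fun, Fintype.card_bool, Fintype.card_fin, Nat.cast_pow, Nat.cast_ofNat]
    _ = (1 / 2 : ENNReal) ^ j := by
        rw [show j * 2 = j + j by omega, pow_add, ← mul_assoc, ← mul_pow, one_div,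
          ENNReal.mul_inv_cancel (by norm_num) (by norm_num), one_pow, one_mul]

end Meas

def QB (N k : ℕ) (ζ : ℕ → ℕ → Bool) : Prop := Dst N ζ k ∧ (k = 0 ∨ ¬ Dst N ζ (k - 1))

def QE (N k : ℕ) (s : ℕ → ℕ) (ζ : ℕ → ℕ → Bool) : Prop :=
  (∀ c < N, shuffleState N ζ k c = s c) ∧ QB N k ζ

lemma QB_dep (N k : ℕ) (ζ ζ' : ℕ → ℕ → Bool)
    (h : ∀ m, 1 ≤ m → m ≤ k → ∀ c < N, ζ m c = ζ' m c) : QB N k ζ ↔ QB N k ζ' :=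
  and_congr (Dst_congr N k h k le_rfl)
    (or_congr Iff.rfl (not_congr (Dst_congr N k h (k - 1) (by omega))))

lemma QE_dep (N k : ℕ) (s : ℕ → ℕ) (ζ ζ' : ℕ → ℕ → Bool)
    (h : ∀ m, 1 ≤ m → m ≤ k → ∀ c < N, ζ m c = ζ' m c) : QE N k s ζ ↔ QE N k s ζ' :=
  and_congr (forall₂_congr fun c hc => by rw [shuffle_congr N k h c hc])
    (QB_dep N k ζ ζ' h)

lemma QB_perm (N k : ℕ) (σ : Equiv.Perm (Fin N)) (g : Fin k → Fin N → Bool) :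
    QB N k (extPat N k fun m c => g m (σ c)) ↔ QB N k (extPat N k g) := by
  rw [extPat_perm]
  unfold QB
  rw [Dst_reindex N (extPat N k g) k _ (sigHat_bijOn N σ),
    Dst_reindex N (extPat N k g) (k - 1) _ (sigHat_bijOn N σ)]

end RiffleAux

open RiffleAux

/-- Consider the inverse Riffle Shuffle Markov chain on permutations of
`N` cards, driven by i.i.d. fair bits `ξ`. Let `T` be the first time at which the `N`
sequences of bits assigned to the cards are all distinct. Then `T` is a strong stationary
time for this chain: `P(X_k = s ∧ T = k) = (1/N!)·P(T = k)` for every ordering `s`; in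
particular, the permutation of the deck at time `T` is distributed exactly uniformly on
the symmetric group: `P(X_T = s) = 1/N!`. -/
theorem inverse_riffle_shuffle_sst
    {Ω : Type*} [MeasurableSpace Ω] (μ : Measure Ω) [IsProbabilityMeasure μ]
    (N : ℕ) (hN : 0 < N)
    (ξ : ℕ → ℕ → Ω → Bool) (hmeas : ∀ k c, Measurable (ξ k c))
    -- the bits are i.i.d. and fair
    (hiid : ∀ (F : Finset (ℕ × ℕ)) (f : ℕ → ℕ → Bool), (∀ p ∈ F, p.2 < N) →
      μ {ω | ∀ p ∈ F, ξ p.1 p.2 ω = f p.1 p.2} = (1 / 2 : ENNReal) ^ F.card)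
    (T : Ω → ℕ∞)
    -- T is the first time at which the bit sequences of all N cards are distinct
    (hT : ∀ (ω : Ω) (k : ℕ), T ω ≤ (k : ℕ∞) ↔
      ∀ c₁ < N, ∀ c₂ < N, c₁ ≠ c₂ → ∃ m, 1 ≤ m ∧ m ≤ k ∧ ξ m c₁ ω ≠ ξ m c₂ ω) :
    -- T is a strong stationary time
    (∀ (k : ℕ) (s : ℕ → ℕ), Set.BijOn s (Set.Iio N) (Set.Iio N) →
      μ {ω | (∀ c < N, shuffleState N (fun m c' => ξ m c' ω) k c = s c) ∧ T ω = (k : ℕ∞)}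
        = ENNReal.ofReal (1 / (N.factorial : ℝ)) * μ {ω | T ω = (k : ℕ∞)}) ∧
    -- in particular, the ordering at time T is exactly uniform
    (∀ s : ℕ → ℕ, Set.BijOn s (Set.Iio N) (Set.Iio N) →
      μ {ω | ∃ k : ℕ, T ω = (k : ℕ∞) ∧
          ∀ c < N, shuffleState N (fun m c' => ξ m c' ω) k c = s c}
        = ENNReal.ofReal (1 / (N.factorial : ℝ))) := by
  classical
  have hTeq : ∀ (ω : Ω) (k : ℕ), T ω = (k : ℕ∞) ↔ QB N k (fun m c => ξ m c ω) := by
    intro ω k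
    constructor
    · intro h
      refine ⟨(hT ω k).mp (le_of_eq h), ?_⟩
      rcases Nat.eq_zero_or_pos k with rfl | hk
      · exact Or.inl rfl
      · refine Or.inr fun hD => ?_
        have h2 := (hT ω (k - 1)).mpr hD
        rw [h, Nat.cast_le] at h2
        omega
    · rintro ⟨h1, h2⟩
      have hle : T ω ≤ (k : ℕ∞) := (hT ω k).mpr h1
      have hne : T ω ≠ ⊤ := fun hc => by
        rw [hc] at hle
        exact ENat.coe_ne_top k (top_le_iff.mp hle)
      obtain ⟨n, hn⟩ : ∃ n : ℕ, (n : ℕ∞) = T ω := WithTop.ne_top_iff_exists.mp hne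
      rw [← hn] at hle ⊢
      rw [Nat.cast_le] at hle
      have hnk : n = k := by
        rcases h2 with rfl | h2
        · omega
        · have hgt : ¬ T ω ≤ ((k - 1 : ℕ) : ℕ∞) := fun hc => h2 ((hT ω (k - 1)).mp hc)
          rw [← hn, Nat.cast_le] at hgt
          omega
      exact_mod_cast hnk
  have hsetB : ∀ k : ℕ, {ω | T ω = (k : ℕ∞)} = {ω | QB N k (fun m c => ξ m c ω)} :=
    fun k => Set.ext fun ω => hTeq ω k
  have hsetE : ∀ (k : ℕ) (s : ℕ → ℕ),
      {ω | (∀ c < N, shuffleState N (fun m c' => ξ m c' ω) k c = s c) ∧ T ω = (k : ℕ∞)}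
        = {ω | QE N k s (fun m c => ξ m c ω)} :=
    fun k s => Set.ext fun ω => and_congr_right fun _ => hTeq ω k
  have part1 : ∀ (k : ℕ) (s : ℕ → ℕ), Set.BijOn s (Set.Iio N) (Set.Iio N) →
      μ {ω | (∀ c < N, shuffleState N (fun m c' => ξ m c' ω) k c = s c) ∧ T ω = (k : ℕ∞)}
        = ENNReal.ofReal (1 / (N.factorial : ℝ)) * μ {ω | T ω = (k : ℕ∞)} := by
    intro k s hs
    rw [hsetE k s, hsetB k,
      event_meas μ N ξ hmeas hiid k (QE N k s) (QE_dep N k s),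
      event_meas μ N ξ hmeas hiid k (QB N k) (QB_dep N k)]
    have hcount := count_main (P := fun g : Fin k → Fin N → Bool => QB N k (extPat N k g)) hN
      (fun σ g => QB_perm N k σ g) (fun g hg => hg.1) hs
    have hfe : (Finset.univ.filter fun g : Fin k → Fin N → Bool => QE N k s (extPat N k g)) =
        (Finset.univ.filter fun g : Fin k → Fin N → Bool => QB N k (extPat N k g) ∧
          ∀ c < N, shuffleState N (extPat N k g) k c = s c) := by
      apply Finset.filter_congr
      intro g _
      unfold QE
      tauto
    rw [hfe, hcount]
    have hofr : ENNReal.ofReal (1 / (N.factorial : ℝ)) = ((N.factorial : ℕ) : ENNReal)⁻¹ := by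
      rw [one_div, ENNReal.ofReal_inv_of_pos (by positivity), ENNReal.ofReal_natCast]
    rw [hofr, Nat.cast_mul, ← mul_assoc, ← mul_assoc,
      ENNReal.inv_mul_cancel (by exact_mod_cast (Nat.factorial_pos N).ne')
        (ENNReal.natCast_ne_top _), one_mul]
  refine ⟨part1, ?_⟩
  intro s hs
  have hEmeas : ∀ k : ℕ, MeasurableSet {ω | QE N k s (fun m c => ξ m c ω)} :=
    fun k => event_measurable N ξ hmeas k _ (QE_dep N k s)
  have hBmeas : ∀ k : ℕ, MeasurableSet {ω | QB N k (fun m c => ξ m c ω)} :=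
    fun k => event_measurable N ξ hmeas k _ (QB_dep N k)
  have hU : {ω | ∃ k : ℕ, T ω = (k : ℕ∞) ∧
        ∀ c < N, shuffleState N (fun m c' => ξ m c' ω) k c = s c}
      = ⋃ k : ℕ, {ω | QE N k s (fun m c => ξ m c ω)} := by
    ext ω
    simp only [Set.mem_setOf_eq, Set.mem_iUnion]
    constructor
    · rintro ⟨k, h1, h2⟩
      exact ⟨k, h2, (hTeq ω k).mp h1⟩
    · rintro ⟨k, h1, h2⟩
      exact ⟨k, (hTeq ω k).mpr h2, h1⟩
  have hdisjE : Pairwise (Function.onFun Disjoint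
      fun k : ℕ => {ω | QE N k s (fun m c => ξ m c ω)}) := by
    intro a b hab
    rw [Function.onFun, Set.disjoint_left]
    intro ω h1 h2
    have e1 : T ω = (a : ℕ∞) := (hTeq ω a).mpr h1.2
    have e2 : T ω = (b : ℕ∞) := (hTeq ω b).mpr h2.2
    exact hab (Nat.cast_inj.mp (e1.symm.trans e2))
  have hdisjB : Pairwise (Function.onFun Disjoint
      fun k : ℕ => {ω | QB N k (fun m c => ξ m c ω)}) := by
    intro a b hab
    rw [Function.onFun, Set.disjoint_left]
    intro ω h1 h2
    have e1 : T ω = (a : ℕ∞) := (hTeq ω a).mpr h1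
    have e2 : T ω = (b : ℕ∞) := (hTeq ω b).mpr h2
    exact hab (Nat.cast_inj.mp (e1.symm.trans e2))
  rw [hU, measure_iUnion hdisjE hEmeas]
  have hone : ∀ k : ℕ, μ {ω | QE N k s (fun m c => ξ m c ω)} =
      ENNReal.ofReal (1 / (N.factorial : ℝ)) * μ {ω | QB N k (fun m c => ξ m c ω)} := by
    intro k
    rw [← hsetE k s, ← hsetB k]
    exact part1 k s hs
  rw [tsum_congr hone, ENNReal.tsum_mul_left]
  have htop : μ {ω | T ω = ⊤} = 0 := by
    have hbound : ∀ j : ℕ, μ {ω | T ω = ⊤} ≤ ((N * N : ℕ) : ENNReal) * (1 / 2 : ENNReal) ^ j := by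
      intro j
      set Agr : ℕ × ℕ → Set Ω := fun p =>
        if p.1 ≠ p.2 then {ω | ∀ m, 1 ≤ m → m ≤ j → ξ m p.1 ω = ξ m p.2 ω} else ∅ with hAgr
      have hsub : {ω | T ω = ⊤} ⊆ ⋃ p ∈ Finset.range N ×ˢ Finset.range N, Agr p := by
        intro ω hω
        have hωt : T ω = ⊤ := hω
        have hnD : ¬ Dst N (fun m c => ξ m c ω) j := by
          intro hD
          have := (hT ω j).mpr hD
          rw [hωt, top_le_iff] at this
          exact ENat.coe_ne_top j this
        rw [Dst] at hnD
        push_neg at hnD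
        obtain ⟨c₁, h1, c₂, h2, hne, hagree⟩ := hnD
        rw [Set.mem_iUnion]
        refine ⟨(c₁, c₂), ?_⟩
        rw [Set.mem_iUnion]
        refine ⟨Finset.mem_product.mpr ⟨Finset.mem_range.mpr h1, Finset.mem_range.mpr h2⟩, ?_⟩
        rw [hAgr]
        simp only [if_pos hne]
        intro m hm1 hm2
        exact hagree m hm1 hm2
      calc μ {ω | T ω = ⊤} ≤ μ (⋃ p ∈ Finset.range N ×ˢ Finset.range N, Agr p) :=
            measure_mono hsub
        _ ≤ ∑ p ∈ Finset.range N ×ˢ Finset.range N, μ (Agr p) := measure_biUnion_finset_le _ _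
        _ ≤ ∑ _p ∈ Finset.range N ×ˢ Finset.range N, (1 / 2 : ENNReal) ^ j := by
            refine Finset.sum_le_sum fun p hp => ?_
            rcases Finset.mem_product.mp hp with ⟨hp1, hp2⟩
            by_cases hpe : p.1 ≠ p.2
            · rw [hAgr]
              simp only [if_pos hpe]
              exact pair_bound μ N ξ hiid (Finset.mem_range.mp hp1)
                (Finset.mem_range.mp hp2) hpe j
            · rw [hAgr]
              simp only [if_neg hpe]
              simp
        _ = ((N * N : ℕ) : ENNReal) * (1 / 2 : ENNReal) ^ j := by
            rw [Finset.sum_const, Finset.card_product, Finset.card_range, nsmul_eq_mul]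
    have htend : Filter.Tendsto (fun j : ℕ => ((N * N : ℕ) : ENNReal) * (1 / 2 : ENNReal) ^ j)
        Filter.atTop (nhds 0) := by
      have h2 : Filter.Tendsto (fun j : ℕ => (1 / 2 : ENNReal) ^ j) Filter.atTop (nhds 0) :=
        ENNReal.tendsto_pow_atTop_nhds_zero_of_lt_one (by norm_num)
      have := ENNReal.Tendsto.const_mul h2 (Or.inr (ENNReal.natCast_ne_top (N * N)))
      simpa using this
    have := ge_of_tendsto' htend hbound
    exact le_antisymm this zero_le
  have hsum : ∑' k : ℕ, μ {ω | QB N k (fun m c => ξ m c ω)} = 1 := by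
    rw [← measure_iUnion hdisjB hBmeas]
    have hUB : (⋃ k : ℕ, {ω | QB N k (fun m c => ξ m c ω)}) = {ω | T ω ≠ ⊤} := by
      ext ω
      simp only [Set.mem_iUnion, Set.mem_setOf_eq]
      constructor
      · rintro ⟨k, hk⟩
        intro hc
        have := (hTeq ω k).mpr hk
        rw [hc] at this
        exact ENat.coe_ne_top k this.symm
      · intro h
        obtain ⟨n, hn⟩ : ∃ n : ℕ, (n : ℕ∞) = T ω := WithTop.ne_top_iff_exists.mp h
        exact ⟨n, (hTeq ω n).mp hn.symm⟩
    rw [hUB]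
    have hcover : (1 : ENNReal) ≤ μ {ω | T ω ≠ ⊤} := by
      have hu : (Set.univ : Set Ω) ⊆ {ω | T ω ≠ ⊤} ∪ {ω | T ω = ⊤} := by
        intro ω _
        by_cases h : T ω = ⊤
        · exact Or.inr h
        · exact Or.inl h
      calc (1 : ENNReal) = μ Set.univ := measure_univ.symm
        _ ≤ μ ({ω | T ω ≠ ⊤} ∪ {ω | T ω = ⊤}) := measure_mono hu
        _ ≤ μ {ω | T ω ≠ ⊤} + μ {ω | T ω = ⊤} := measure_union_le _ _
        _ = μ {ω | T ω ≠ ⊤} := by rw [htop, add_zero]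
    exact le_antisymm prob_le_one hcover
  rw [hsum, mul_one]
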